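/- Let p ≡ 1 (mod 4) be prime, let 0 ≤ δ < 1, and let the Paley matrix Φ of p satisfy the (K, δ)-restricted isometry property. If I ⊆ F_p is an independent set in the Paley graph on F_p with |I| ≤ K, then |I| ≤ δ·√p + 1. -/

import Mathlib

open scoped BigOperators

/-- The Paley matrix: rows are indexed by the set `Q` of squares in `F_p`, columns
by `F_p` together with one extra index `∗` (here `none`). -/
noncomputable def paleyMatrix (p : ℕ) [Fact (Nat.Prime p)] :
    Matrix {x : ZMod p // IsSquare x} (Option (ZMod p)) ℂ := fun q j =>
  match j with
  | some j =>
      (if (q : ZMod p) = 0 then (1 : ℂ) / Real.sqrt p else (Real.sqrt (2 / p) : ℂ)) *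
        Complex.exp (-(2 * Real.pi * Complex.I) * (((q : ZMod p) * j).val : ℕ) / p)
  | none => if (q : ZMod p) = 0 then 1 else 0

/-- `Φ` satisfies the `(K, δ)`-restricted isometry property: for every real vector
`x` with at most `K` nonzero entries, `(1−δ)‖x‖² ≤ ‖Φx‖² ≤ (1+δ)‖x‖²`. -/
def RIP {m n : Type*} [Fintype m] [Fintype n] (Φ : Matrix m n ℂ)
    (K : ℕ) (δ : ℝ) : Prop :=
  ∀ x : n → ℝ, (Finset.univ.filter fun i => x i ≠ 0).card ≤ K →
    (1 - δ) * (∑ i, x i ^ 2) ≤ ∑ r, ‖∑ i, Φ r i * (x i : ℂ)‖ ^ 2 ∧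
    ∑ r, ‖∑ i, Φ r i * (x i : ℂ)‖ ^ 2 ≤ (1 + δ) * (∑ i, x i ^ 2)

/-- `S` is an independent set in the Paley graph on `F_p`: no two distinct elements
`x, y` of `S` are adjacent, i.e. `χ(x − y) ≠ 1`. -/
def IsPaleyIndepSet (p : ℕ) [Fact (Nat.Prime p)] (S : Finset (ZMod p)) : Prop :=
  ∀ x ∈ S, ∀ y ∈ S, x ≠ y → quadraticChar (ZMod p) (x - y) ≠ 1

variable (p : ℕ) [Fact (Nat.Prime p)]

noncomputable def paleyChar : MulChar (ZMod p) ℂ :=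
  (quadraticChar (ZMod p)).ringHomComp (Int.castRingHom ℂ)

lemma paleyChar_apply (a : ZMod p) : paleyChar p a = ((quadraticChar (ZMod p) a : ℤ) : ℂ) := rfl

lemma psi_conj (a : ZMod p) :
    (starRingEnd ℂ) (ZMod.stdAddChar a) = ZMod.stdAddChar (-a) := by
  rw [ZMod.stdAddChar_apply, ZMod.stdAddChar_apply, ← Circle.coe_inv_eq_conj]
  norm_cast
  rw [AddChar.map_neg_eq_inv]

lemma sum_psi (d : ZMod p) :
    ∑ a : ZMod p, ZMod.stdAddChar (a * d) = if d = 0 then (p : ℂ) else 0 := by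
  split_ifs with h
  · simp [h, ZMod.card]
  · have h2 := AddChar.sum_eq_zero_of_ne_one (ZMod.isPrimitive_stdAddChar p h)
    simp only [AddChar.mulShift_apply] at h2
    rw [← h2]
    exact Finset.sum_congr rfl fun a _ => by rw [mul_comm]

lemma paleyChar_ne_one (hp4 : p % 4 = 1) : paleyChar p ≠ 1 := by
  have hinj : Function.Injective (Int.castRingHom ℂ) := fun a b h => by simpa using h
  simp only [ne_eq, paleyChar, MulChar.ringHomComp_eq_one_iff hinj]
  exact quadraticChar_ne_one (F := ZMod p) (by rw [ZMod.ringChar_zmod_n]; omega)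

lemma paley_gauss_sq (hp4 : p % 4 = 1) :
    gaussSum (paleyChar p) ZMod.stdAddChar ^ 2 = (p : ℂ) := by
  rw [gaussSum_sq (paleyChar_ne_one p hp4)
    ((quadraticChar_isQuadratic (ZMod p)).comp (Int.castRingHom ℂ))
    (ZMod.isPrimitive_stdAddChar p)]
  rw [paleyChar_apply, quadraticChar_neg_one (by rw [ZMod.ringChar_zmod_n]; omega),
    ZMod.card, ZMod.χ₄_nat_one_mod_four hp4]
  simp

lemma paley_gauss_conj (hp4 : p % 4 = 1) :
    (starRingEnd ℂ) (gaussSum (paleyChar p) ZMod.stdAddChar)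
      = gaussSum (paleyChar p) ZMod.stdAddChar := by
  have hm1 : quadraticChar (ZMod p) (-1) = 1 := by
    rw [quadraticChar_neg_one (by rw [ZMod.ringChar_zmod_n]; omega), ZMod.card,
      ZMod.χ₄_nat_one_mod_four hp4]
  rw [gaussSum, map_sum,
    ← Equiv.sum_comp (Equiv.neg (ZMod p)) (fun a => paleyChar p a * ZMod.stdAddChar a)]
  refine Finset.sum_congr rfl fun a _ => ?_
  rw [map_mul, psi_conj, Equiv.neg_apply]
  congr 1
  rw [paleyChar_apply, paleyChar_apply, map_intCast]
  congr 1
  rw [show (-a : ZMod p) = -1 * a by ring, map_mul, hm1, one_mul]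

lemma sum_char_psi (hp4 : p % 4 = 1) (d : ZMod p) :
    ∑ a : ZMod p, paleyChar p a * ZMod.stdAddChar (a * d)
      = paleyChar p d * gaussSum (paleyChar p) ZMod.stdAddChar := by
  rcases eq_or_ne d 0 with hd | hd
  · subst hd
    simp only [mul_zero, AddChar.map_zero_eq_one, mul_one]
    rw [MulChar.sum_eq_zero_of_ne_one (paleyChar_ne_one p hp4),
      MulChar.map_nonunit _ (by simp : ¬ IsUnit (0 : ZMod p)), zero_mul]
  · have hu : IsUnit d := Ne.isUnit hd
    have h1 := gaussSum_mulShift (paleyChar p) ZMod.stdAddChar hu.unit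
    rw [IsUnit.unit_spec] at h1
    have h2 : gaussSum (paleyChar p) (AddChar.mulShift ZMod.stdAddChar d)
        = ∑ a : ZMod p, paleyChar p a * ZMod.stdAddChar (a * d) :=
      Finset.sum_congr rfl fun a _ => by rw [AddChar.mulShift_apply, mul_comm d a]
    have hsq : paleyChar p d * paleyChar p d = 1 := by
      rw [paleyChar_apply, ← Int.cast_mul]
      rcases quadraticChar_dichotomy hd with h | h <;> rw [h] <;> norm_num
    calc ∑ a : ZMod p, paleyChar p a * ZMod.stdAddChar (a * d)
        = (paleyChar p d * paleyChar p d) *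
            gaussSum (paleyChar p) (AddChar.mulShift ZMod.stdAddChar d) := by
          rw [hsq, one_mul, h2]
      _ = paleyChar p d * gaussSum (paleyChar p) ZMod.stdAddChar := by
          rw [mul_assoc, h1]

lemma prod_expand (I : Finset (ZMod p)) (a : ZMod p) :
    (∑ j ∈ I, ZMod.stdAddChar (-(a * j))) *
        (starRingEnd ℂ) (∑ j ∈ I, ZMod.stdAddChar (-(a * j)))
      = ∑ x ∈ I, ∑ y ∈ I, ZMod.stdAddChar (a * (y - x)) := by
  rw [map_sum]
  have hc : ∀ j : ZMod p, (starRingEnd ℂ) (ZMod.stdAddChar (-(a * j)))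
      = ZMod.stdAddChar (a * j) := fun j => by rw [psi_conj, neg_neg]
  rw [Finset.sum_congr rfl fun j _ => hc j, Finset.sum_mul_sum]
  refine Finset.sum_congr rfl fun x _ => Finset.sum_congr rfl fun y _ => ?_
  rw [← AddChar.map_add_eq_mul]
  ring_nf

lemma L1 (I : Finset (ZMod p)) :
    ∑ a : ZMod p, ∑ x ∈ I, ∑ y ∈ I, ZMod.stdAddChar (a * (y - x))
      = (p : ℂ) * I.card := by
  rw [Finset.sum_comm]
  have hx : ∀ x ∈ I, ∑ a : ZMod p, ∑ y ∈ I, ZMod.stdAddChar (a * (y - x)) = (p : ℂ) := by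
    intro x hx
    rw [Finset.sum_comm]
    have hy : ∀ y ∈ I, ∑ a : ZMod p, ZMod.stdAddChar (a * (y - x))
        = if y = x then (p : ℂ) else 0 := by
      intro y _
      rw [sum_psi]
      simp [sub_eq_zero]
    rw [Finset.sum_congr rfl hy, Finset.sum_ite_eq' I x fun _ => (p : ℂ), if_pos hx]
  rw [Finset.sum_congr rfl hx, Finset.sum_const, nsmul_eq_mul, mul_comm]

lemma L2 (hp4 : p % 4 = 1) (I : Finset (ZMod p)) :
    ∑ a : ZMod p, paleyChar p a * ∑ x ∈ I, ∑ y ∈ I, ZMod.stdAddChar (a * (y - x))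
      = (∑ x ∈ I, ∑ y ∈ I, paleyChar p (y - x)) * gaussSum (paleyChar p) ZMod.stdAddChar := by
  simp_rw [Finset.mul_sum]
  rw [Finset.sum_comm]
  rw [Finset.sum_congr rfl fun x _ => Finset.sum_comm (γ := ZMod p)]
  rw [Finset.sum_mul]
  refine Finset.sum_congr rfl fun x _ => ?_
  rw [Finset.sum_mul]
  exact Finset.sum_congr rfl fun y _ => sum_char_psi p hp4 (y - x)

lemma indep_char_sum (I : Finset (ZMod p))
    (hI : ∀ x ∈ I, ∀ y ∈ I, x ≠ y → quadraticChar (ZMod p) (x - y) ≠ 1) :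
    ∑ x ∈ I, ∑ y ∈ I, paleyChar p (y - x)
      = (I.card : ℂ) - (I.card : ℂ) ^ 2 := by
  have hx : ∀ x ∈ I, ∑ y ∈ I, paleyChar p (y - x) = 1 - (I.card : ℂ) := by
    intro x hx
    have hy : ∀ y ∈ I, paleyChar p (y - x)
        = (if y = x then (1 : ℂ) else 0) + (-1) := by
      intro y hy
      by_cases h : y = x
      · subst h
        rw [if_pos rfl, sub_self, MulChar.map_nonunit _ (by simp : ¬ IsUnit (0 : ZMod p))]
        norm_num
      · rw [if_neg h]
        have h1 : quadraticChar (ZMod p) (y - x) = -1 := by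
          rcases quadraticChar_dichotomy (sub_ne_zero.mpr h) with h2 | h2
          · exact absurd h2 (hI y hy x hx h)
          · exact h2
        rw [paleyChar_apply, h1]
        norm_num
    rw [Finset.sum_congr rfl hy, Finset.sum_add_distrib,
      Finset.sum_ite_eq' I x fun _ => (1 : ℂ), if_pos hx, Finset.sum_const]
    simp [sub_eq_add_neg]
  rw [Finset.sum_congr rfl hx, Finset.sum_const, nsmul_eq_mul]
  ring

lemma subtype_weight_sum (T : ZMod p → ℂ) :
    ∑ r : {x : ZMod p // IsSquare x},
        (if (r : ZMod p) = 0 then (1 : ℂ) / p else 2 / p) * T r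
      = ∑ a : ZMod p, ((1 + paleyChar p a) / p) * T a := by
  classical
  have hsplit := Finset.sum_filter_add_sum_filter_not Finset.univ
    (fun a : ZMod p => IsSquare a) (fun a => ((1 + paleyChar p a) / p) * T a)
  rw [← hsplit]
  have h2 : ∑ a ∈ Finset.univ.filter (fun a : ZMod p => ¬ IsSquare a),
      ((1 + paleyChar p a) / p) * T a = 0 := by
    refine Finset.sum_eq_zero fun a ha => ?_
    rw [Finset.mem_filter] at ha
    rw [paleyChar_apply, quadraticChar_neg_one_iff_not_isSquare.mpr ha.2]
    norm_num
  rw [h2, add_zero]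
  rw [show (∑ x ∈ Finset.univ.filter (fun a : ZMod p => IsSquare a),
        ((1 + paleyChar p x) / p) * T x)
      = ∑ r : {x : ZMod p // IsSquare x}, ((1 + paleyChar p r) / p) * T r from
    Finset.sum_subtype _ (fun a => by simp) _]
  refine Finset.sum_congr rfl fun r _ => ?_
  by_cases h : (r : ZMod p) = 0
  · rw [if_pos h, h, paleyChar_apply, quadraticChar_eq_zero_iff.mpr rfl]
    norm_num
  · rw [if_neg h, paleyChar_apply, (quadraticChar_one_iff_isSquare h).mpr r.2]
    norm_num

def indVec (I : Finset (ZMod p)) : Option (ZMod p) → ℝ := fun i =>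
  match i with
  | some j => if j ∈ I then 1 else 0
  | none => 0

lemma indVec_support (I : Finset (ZMod p)) :
    (Finset.univ.filter fun i => indVec p I i ≠ 0).card = I.card := by
  have h : (Finset.univ.filter fun i => indVec p I i ≠ 0) = I.image some := by
    ext i
    cases i with
    | none => rw [Finset.mem_filter]; simp [indVec]
    | some j => rw [Finset.mem_filter]; simp [indVec]
  rw [h, Finset.card_image_of_injective _ (Option.some_injective _)]

lemma indVec_sumsq (I : Finset (ZMod p)) :
    ∑ i, indVec p I i ^ 2 = I.card := by
  rw [Fintype.sum_option]
  have : ∀ j : ZMod p, indVec p I (some j) ^ 2 = if j ∈ I then 1 else 0 := by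
    intro j
    simp only [indVec]
    split_ifs <;> norm_num
  rw [Finset.sum_congr rfl fun j _ => this j]
  rw [Finset.sum_ite_mem, Finset.univ_inter, Finset.sum_const]
  simp [indVec]

lemma exp_eq (a : ZMod p) :
    Complex.exp (-(2 * Real.pi * Complex.I) * ((a.val : ℕ) : ℂ) / p)
      = ZMod.stdAddChar (-a) := by
  have h := ZMod.stdAddChar_coe (N := p) (-(a.val : ℤ))
  have h2 : (((-(a.val : ℤ)) : ℤ) : ZMod p) = -a := by
    push_cast
    rw [ZMod.natCast_zmod_val]
  rw [h2] at h
  rw [h]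
  congr 1
  push_cast
  ring

lemma paley_row (I : Finset (ZMod p)) (r : {x : ZMod p // IsSquare x}) :
    ∑ i, paleyMatrix p r i * ((indVec p I i : ℝ) : ℂ)
      = (if (r : ZMod p) = 0 then (1 : ℂ) / Real.sqrt p else (Real.sqrt (2 / p) : ℂ)) *
        ∑ j ∈ I, ZMod.stdAddChar (-((r : ZMod p) * j)) := by
  rw [Fintype.sum_option]
  have h0 : paleyMatrix p r none * ((indVec p I none : ℝ) : ℂ) = 0 := by
    simp [indVec]
  rw [h0, zero_add]
  have h1 : ∀ j : ZMod p, paleyMatrix p r (some j) * ((indVec p I (some j) : ℝ) : ℂ)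
      = if j ∈ I then
          (if (r : ZMod p) = 0 then (1 : ℂ) / Real.sqrt p else (Real.sqrt (2 / p) : ℂ)) *
            ZMod.stdAddChar (-((r : ZMod p) * j)) else 0 := by
    intro j
    simp only [indVec, paleyMatrix, exp_eq p ((r : ZMod p) * j)]
    split_ifs <;> simp
  rw [Finset.sum_congr rfl fun j _ => h1 j, Finset.sum_ite_mem, Finset.univ_inter,
    Finset.mul_sum]

set_option maxHeartbeats 1000000 in
lemma norm_val (hp4 : p % 4 = 1) (I : Finset (ZMod p))
    (hI : ∀ x ∈ I, ∀ y ∈ I, x ≠ y → quadraticChar (ZMod p) (x - y) ≠ 1) :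
    ((∑ r : {x : ZMod p // IsSquare x},
        ‖∑ i, paleyMatrix p r i * ((indVec p I i : ℝ) : ℂ)‖ ^ 2 : ℝ) : ℂ)
      = (I.card : ℂ)
        - (((I.card : ℂ) ^ 2 - (I.card : ℂ)) / p) * gaussSum (paleyChar p) ZMod.stdAddChar := by
  have hp0 : (p : ℂ) ≠ 0 := Nat.cast_ne_zero.mpr (Fact.out (p := p.Prime)).pos.ne'
  have hpR : (0 : ℝ) ≤ (p : ℝ) := Nat.cast_nonneg p
  have habs : ∀ z : ℂ, ((‖z‖ : ℝ) : ℂ) ^ 2 = z * (starRingEnd ℂ) z := fun z => by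
    rw [← Complex.ofReal_pow, Complex.sq_norm, Complex.mul_conj]
  push_cast
  have hstep : ∀ r : {x : ZMod p // IsSquare x},
      ((‖∑ i, paleyMatrix p r i * ((indVec p I i : ℝ) : ℂ)‖ : ℝ) : ℂ) ^ 2
        = (if (r : ZMod p) = 0 then (1 : ℂ) / p else 2 / p) *
            ((∑ j ∈ I, ZMod.stdAddChar (-((r : ZMod p) * j))) *
              (starRingEnd ℂ) (∑ j ∈ I, ZMod.stdAddChar (-((r : ZMod p) * j)))) := by
    intro r
    rw [habs, paley_row p I r, map_mul, mul_mul_mul_comm]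
    congr 1
    split_ifs with h
    · rw [map_div₀, map_one, Complex.conj_ofReal, div_mul_div_comm, one_mul,
        ← Complex.ofReal_mul, Real.mul_self_sqrt hpR]
      simp
    · rw [Complex.conj_ofReal, ← Complex.ofReal_mul,
        Real.mul_self_sqrt (by positivity : (0:ℝ) ≤ 2 / p)]
      push_cast
      ring
  calc ∑ r : {x : ZMod p // IsSquare x},
        ((‖∑ i, paleyMatrix p r i * ((indVec p I i : ℝ) : ℂ)‖ : ℝ) : ℂ) ^ 2
      = ∑ r : {x : ZMod p // IsSquare x},
          (if (r : ZMod p) = 0 then (1 : ℂ) / p else 2 / p) *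
            ((∑ j ∈ I, ZMod.stdAddChar (-((r : ZMod p) * j))) *
              (starRingEnd ℂ) (∑ j ∈ I, ZMod.stdAddChar (-((r : ZMod p) * j)))) :=
        Finset.sum_congr rfl fun r _ => hstep r
    _ = ∑ a : ZMod p, ((1 + paleyChar p a) / p) *
          ((∑ j ∈ I, ZMod.stdAddChar (-(a * j))) *
            (starRingEnd ℂ) (∑ j ∈ I, ZMod.stdAddChar (-(a * j)))) :=
        subtype_weight_sum p (fun a => (∑ j ∈ I, ZMod.stdAddChar (-(a * j))) *
          (starRingEnd ℂ) (∑ j ∈ I, ZMod.stdAddChar (-(a * j))))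
    _ = ∑ a : ZMod p, ((1 / p) * (∑ x ∈ I, ∑ y ∈ I, ZMod.stdAddChar (a * (y - x)))
          + (1 / p) * (paleyChar p a * ∑ x ∈ I, ∑ y ∈ I, ZMod.stdAddChar (a * (y - x)))) := by
        refine Finset.sum_congr rfl fun a _ => ?_
        rw [prod_expand]
        ring
    _ = (1 / p) * ((p : ℂ) * I.card)
          + (1 / p) * (((I.card : ℂ) - (I.card : ℂ) ^ 2) * gaussSum (paleyChar p) ZMod.stdAddChar) := by
        rw [Finset.sum_add_distrib, ← Finset.mul_sum, ← Finset.mul_sum, L1,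
          L2 p hp4, indep_char_sum p I hI]
    _ = (I.card : ℂ)
        - (((I.card : ℂ) ^ 2 - (I.card : ℂ)) / p) * gaussSum (paleyChar p) ZMod.stdAddChar := by
        field_simp
        ring

theorem paley_RIP_indep_set_bound (p : ℕ) [Fact (Nat.Prime p)] (hp4 : p % 4 = 1)
    (K : ℕ) (δ : ℝ) (hδ0 : 0 ≤ δ) (hδ1 : δ < 1)
    (hRIP : RIP (paleyMatrix p) K δ)
    (I : Finset (ZMod p)) (hI : IsPaleyIndepSet p I) (hIK : I.card ≤ K) :
    (I.card : ℝ) ≤ δ * Real.sqrt p + 1 := by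
  classical
  have hp0R : (0 : ℝ) < p := by exact_mod_cast (Fact.out (p := p.Prime)).pos
  have hsp : 0 < Real.sqrt p := Real.sqrt_pos.mpr hp0R
  rcases Nat.eq_zero_or_pos I.card with hN0 | hNpos
  · rw [hN0]
    push_cast
    positivity
  obtain ⟨h1, h2⟩ := hRIP (indVec p I) (by rw [indVec_support]; exact hIK)
  rw [indVec_sumsq] at h1 h2
  set N : ℝ := (I.card : ℝ) with hNdef
  have hN1 : 1 ≤ N := by
    have := Nat.succ_le_of_lt hNpos
    rw [hNdef]; exact_mod_cast this
  -- the Gauss sum is real with square p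
  set G := gaussSum (paleyChar p) ZMod.stdAddChar with hGdef
  set g : ℝ := G.re with hgdef
  have hGre : ((g : ℝ) : ℂ) = G := Complex.conj_eq_iff_re.mp (paley_gauss_conj p hp4)
  have hg2 : g ^ 2 = p := by
    have := paley_gauss_sq p hp4
    rw [← hGdef, ← hGre] at this
    exact_mod_cast this
  have habsg : |g| = Real.sqrt p := by
    rw [← Real.sqrt_sq_eq_abs, hg2]
  -- value of the quadratic form
  have hval := norm_val p hp4 I hI
  rw [← hGdef, ← hGre] at hval
  have hvalR : ∑ r, ‖∑ i, paleyMatrix p r i * ((indVec p I i : ℝ) : ℂ)‖ ^ 2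
      = N - ((N ^ 2 - N) / p) * g := by
    apply Complex.ofReal_injective
    rw [hval, hNdef]
    push_cast
    ring
  rw [hvalR] at h1 h2
  -- both RIP bounds give |(N² − N) g / p| ≤ δ N
  have hc0 : 0 ≤ N ^ 2 - N := by nlinarith
  have habs : |(N ^ 2 - N) / p * g| ≤ δ * N := by
    rw [abs_le]
    constructor <;> nlinarith
  have hkey : (N ^ 2 - N) * Real.sqrt p / p ≤ δ * N := by
    rw [abs_mul, abs_div, abs_of_nonneg hc0, abs_of_pos hp0R, habsg] at habs
    calc (N ^ 2 - N) * Real.sqrt p / p = (N ^ 2 - N) / p * Real.sqrt p := by ring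
      _ ≤ δ * N := habs
  have hfin : N ^ 2 - N ≤ δ * N * Real.sqrt p := by
    have h3 : (N ^ 2 - N) * Real.sqrt p / p * Real.sqrt p ≤ δ * N * Real.sqrt p :=
      mul_le_mul_of_nonneg_right hkey hsp.le
    calc N ^ 2 - N = (N ^ 2 - N) * Real.sqrt p / p * Real.sqrt p := by
          rw [div_mul_eq_mul_div, mul_assoc, Real.mul_self_sqrt hp0R.le, mul_div_assoc,
            div_self hp0R.ne', mul_one]
      _ ≤ δ * N * Real.sqrt p := h3
  nlinarith [mul_nonneg hδ0 hsp.le]
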